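/- Let d be a positive integer, t > 1 a real number, and p > 0 a real scaling factor satisfying p < √((t−1)/2) − √d/2. Then for any vectors e, q ∈ ℝ^d with ‖e‖₂ ≤ 1 and ‖q‖₂ ≤ 1, the fixed-point inner product does not wrap around modulo t: |Σ_{i=1}^{d} ⌊p·e_i⌉ · ⌊p·q_i⌉| ≤ (t−1)/2, where ⌊x⌉ denotes rounding x to a nearest integer (so that |⌊x⌉ − x| ≤ 1/2). -/

import Mathlib

private lemma round_vec_norm_le (d : ℕ) (p : ℝ) (hp : 0 ≤ p)
    (e a : EuclideanSpace ℝ (Fin d)) (he : ‖e‖ ≤ 1)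
    (hr : ∀ i, |a i - p * e i| ≤ 1 / 2) :
    ‖a‖ ≤ p + Real.sqrt d / 2 := by
  have key : ‖a - p • e‖ ≤ Real.sqrt d / 2 := by
    rw [EuclideanSpace.norm_eq]
    have hsum : ∑ i, ‖(a - p • e) i‖ ^ 2 ≤ ∑ _i : Fin d, ((1:ℝ)/2) ^ 2 := by
      apply Finset.sum_le_sum
      intro i _
      have h1 : ‖(a - p • e) i‖ ≤ 1/2 := by
        have heq : (a - p • e) i = a i - p * e i := by
          simp [PiLp.sub_apply, PiLp.smul_apply, smul_eq_mul]
        rw [heq, Real.norm_eq_abs]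
        exact hr i
      exact pow_le_pow_left₀ (norm_nonneg _) h1 2
    calc Real.sqrt (∑ i, ‖(a - p • e) i‖ ^ 2)
        ≤ Real.sqrt (∑ _i : Fin d, ((1:ℝ)/2) ^ 2) := Real.sqrt_le_sqrt hsum
      _ = Real.sqrt ((d : ℝ) * (1/4)) := by
          rw [Finset.sum_const]; norm_num
      _ = Real.sqrt d / 2 := by
          rw [Real.sqrt_mul (Nat.cast_nonneg d),
            show (1:ℝ)/4 = (1/2)^2 by norm_num,
            Real.sqrt_sq (by norm_num : (0:ℝ) ≤ 1/2)]
          ring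
  have hpe : ‖p • e‖ ≤ p := by
    rw [norm_smul, Real.norm_eq_abs, abs_of_nonneg hp]
    nlinarith [norm_nonneg e]
  have h := norm_add_le (p • e) (a - p • e)
  rw [add_sub_cancel] at h
  exact h.trans (add_le_add hpe key)

/-- Fixed-point inner products of unit-norm embeddings do not wrap around the
plaintext modulus: if `p < √((t−1)/2) − √d/2`, then for any `e, q ∈ ℝ^d` with
`‖e‖₂ ≤ 1` and `‖q‖₂ ≤ 1`, `|Σᵢ ⌊p·eᵢ⌉·⌊p·qᵢ⌉| ≤ (t−1)/2`, where `⌊·⌉` rounds to a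
nearest integer. -/
theorem fixed_point_inner_product_no_wraparound
    (d : ℕ) (hd : 0 < d) (t : ℝ) (ht : 1 < t)
    (p : ℝ) (hp : 0 < p)
    (hpt : p < Real.sqrt ((t - 1) / 2) - Real.sqrt d / 2)
    (e q : EuclideanSpace ℝ (Fin d)) (he : ‖e‖ ≤ 1) (hq : ‖q‖ ≤ 1) :
    |∑ i, ((round (p * e i) : ℤ) : ℝ) * ((round (p * q i) : ℤ) : ℝ)| ≤
      (t - 1) / 2 := by
  set a : EuclideanSpace ℝ (Fin d) := WithLp.toLp 2 (fun i => ((round (p * e i) : ℤ) : ℝ)) with ha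
  set b : EuclideanSpace ℝ (Fin d) := WithLp.toLp 2 (fun i => ((round (p * q i) : ℤ) : ℝ)) with hb
  have hsum : ∑ i, ((round (p * e i) : ℤ) : ℝ) * ((round (p * q i) : ℤ) : ℝ)
      = (inner ℝ a b : ℝ) := by
    simp [ha, hb, PiLp.inner_apply, mul_comm]
  have hcs : |(inner ℝ a b : ℝ)| ≤ ‖a‖ * ‖b‖ := abs_real_inner_le_norm a b
  have hna : ‖a‖ ≤ p + Real.sqrt d / 2 := by
    refine round_vec_norm_le d p hp.le e a he fun i => ?_
    have : a i = ((round (p * e i) : ℤ) : ℝ) := by rw [ha]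
    rw [this, abs_sub_comm]
    exact (abs_sub_round (p * e i)).trans (by norm_num)
  have hnb : ‖b‖ ≤ p + Real.sqrt d / 2 := by
    refine round_vec_norm_le d p hp.le q b hq fun i => ?_
    have : b i = ((round (p * q i) : ℤ) : ℝ) := by rw [hb]
    rw [this, abs_sub_comm]
    exact (abs_sub_round (p * q i)).trans (by norm_num)
  have hbound : p + Real.sqrt d / 2 < Real.sqrt ((t - 1) / 2) := by linarith
  have hsq : Real.sqrt ((t - 1) / 2) ^ 2 = (t - 1) / 2 :=
    Real.sq_sqrt (by linarith)
  have hnn : (0:ℝ) ≤ p + Real.sqrt d / 2 := by positivity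
  calc |∑ i, ((round (p * e i) : ℤ) : ℝ) * ((round (p * q i) : ℤ) : ℝ)|
      = |(inner ℝ a b : ℝ)| := by rw [hsum]
    _ ≤ ‖a‖ * ‖b‖ := hcs
    _ ≤ (p + Real.sqrt d / 2) * (p + Real.sqrt d / 2) :=
        mul_le_mul hna hnb (norm_nonneg _) hnn
    _ ≤ (t - 1) / 2 := by nlinarith [Real.sqrt_nonneg ((t-1)/2)]
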